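/- With the B^n_s recursion as above, B^n_{(0,1)} = ∑_{l=1}^{n-1} {l} for all n ≥ 2, where (0,1) is the sequence with s₀=0, s₁=1, all other entries 0, and {l} = l(c̃_{l-1} - w). -/
import Mathlib


/-- `c̃_j = c̃_0 - j·A₁`. -/
noncomputable def ctilde (c0 A1 : ℝ) (j : ℕ) : ℝ := c0 - (j : ℝ) * A1

/-- total `|s| = ∑ s_i`. -/
def totdeg (s : ℕ →₀ ℕ) : ℕ := s.sum fun _ v => v

/-- weighted `[s] = ∑ s_i (i+1)`. -/
def wdeg (s : ℕ →₀ ℕ) : ℕ := s.sum fun i v => v * (i + 1)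

/-- `s - σ₀`: decrement `s₀` by one. -/
noncomputable def subσ₀ (s : ℕ →₀ ℕ) : ℕ →₀ ℕ := s.update 0 (s 0 - 1)

/-- `s - σᵢ` for `i ≥ 1`: increment `s_{i-1}`, decrement `s_i`. -/
noncomputable def subσ (s : ℕ →₀ ℕ) (i : ℕ) : ℕ →₀ ℕ :=
  (s.update (i - 1) (s (i - 1) + 1)).update i (s i - 1)

/-- The recursion defining the numbers `B^n_s` (7.7). -/
def BRec (c0 A1 w : ℝ) (B : ℕ → (ℕ →₀ ℕ) → ℝ) : Prop :=
  B 0 0 = 1 ∧ (∀ s : ℕ →₀ ℕ, s ≠ 0 → B 0 s = 0) ∧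
    ∀ n : ℕ, ∀ s : ℕ →₀ ℕ, 1 ≤ n →
      B n s =
        (if s 0 = 0 then 0 else
          ((n + totdeg s - 1 : ℕ) : ℝ) * (ctilde c0 A1 (n + totdeg s - 2) - w) *
            ∑ l ∈ Finset.range n, B l (subσ₀ s))
        + ∑ i ∈ s.support.filter (fun i => 1 ≤ i),
            ((s (i - 1) : ℝ) + 1) * ∑ l ∈ Finset.range n, B l (subσ s i)

lemma subσ₀_single01 : subσ₀ (Finsupp.single 0 1) = 0 := by
  ext a
  rcases eq_or_ne a 0 with h | h
  · simp [subσ₀, Finsupp.update, Function.update, Finsupp.single_apply, h]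
  · simp [subσ₀, Finsupp.update, Function.update, Finsupp.single_apply, h, Ne.symm h]

lemma subσ_single11 : subσ (Finsupp.single 1 1) 1 = Finsupp.single 0 1 := by
  ext a
  simp [subσ, Finsupp.update, Function.update, Finsupp.single_apply]
  rcases eq_or_ne a 1 with h | h
  · simp [h]
  · rcases eq_or_ne a 0 with h0 | h0
    · simp [h, h0]
    · simp [h, Ne.symm h, h0, Ne.symm h0]

lemma Bzero (c0 A1 w : ℝ) (B : ℕ → (ℕ →₀ ℕ) → ℝ) (hB : BRec c0 A1 w B)
    (m : ℕ) (hm : 1 ≤ m) : B m 0 = 0 := by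
  rw [hB.2.2 m 0 hm]; simp

lemma sumBzero (c0 A1 w : ℝ) (B : ℕ → (ℕ →₀ ℕ) → ℝ) (hB : BRec c0 A1 w B)
    (l : ℕ) (hl : 1 ≤ l) : ∑ m ∈ Finset.range l, B m 0 = 1 := by
  rw [Finset.sum_eq_single_of_mem 0 (Finset.mem_range.2 hl)]
  · exact hB.1
  · intro m _ hm
    exact Bzero c0 A1 w B hB m (Nat.one_le_iff_ne_zero.2 hm)

lemma Bsingle01 (c0 A1 w : ℝ) (B : ℕ → (ℕ →₀ ℕ) → ℝ) (hB : BRec c0 A1 w B)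
    (l : ℕ) (hl : 1 ≤ l) :
    B l (Finsupp.single 0 1) = (l : ℝ) * (ctilde c0 A1 (l - 1) - w) := by
  rw [hB.2.2 l _ hl]
  have ht : totdeg (Finsupp.single 0 1) = 1 := by
    simp [totdeg, Finsupp.sum_single_index]
  have hsupp : (Finsupp.single 0 1 : ℕ →₀ ℕ).support.filter (fun i => 1 ≤ i) = ∅ := by
    rw [Finsupp.support_single_ne_zero 0 one_ne_zero]
    decide
  rw [ht, hsupp, subσ₀_single01, sumBzero c0 A1 w B hB l hl]
  have h1 : l + 1 - 1 = l := by omega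
  have h2 : l + 1 - 2 = l - 1 := by omega
  simp [h1, h2]

theorem stmt_10 (c0 A1 w : ℝ) (B : ℕ → (ℕ →₀ ℕ) → ℝ) (hB : BRec c0 A1 w B) :
    ∀ n : ℕ, 2 ≤ n →
      B n (Finsupp.single 1 1) =
        ∑ l ∈ Finset.Icc 1 (n - 1), (l : ℝ) * (ctilde c0 A1 (l - 1) - w) := by
  intro n hn
  rw [hB.2.2 n _ (by omega)]
  have hsupp : (Finsupp.single 1 1 : ℕ →₀ ℕ).support.filter (fun i => 1 ≤ i) = {1} := by
    rw [Finsupp.support_single_ne_zero 1 one_ne_zero]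
    decide
  rw [hsupp]
  have h10 : (Finsupp.single 1 1 : ℕ →₀ ℕ) 0 = 0 := by simp
  rw [Finset.sum_singleton, subσ_single11, h10]
  norm_num
  have : Finset.range n = insert 0 (Finset.Icc 1 (n - 1)) := by
    ext x; simp [Finset.mem_range, Finset.mem_Icc]; omega
  rw [this, Finset.sum_insert (by simp)]
  rw [hB.2.1 _ (by simp)]
  rw [zero_add]
  exact Finset.sum_congr rfl fun l hl => Bsingle01 c0 A1 w B hB l (Finset.mem_Icc.1 hl).1
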